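/- The n-queens program NQUEENS is correct w.r.t. the specification S = S_pq ∪ S_pqs: its least Herbrand model is contained in S. -/
import Mathlib


/-- Ground terms of the Herbrand universe: numerals built from `zero`/`succ`,
list constructors `cons`/`nil`, and infinitely many other constants `sym n`. -/
inductive Term : Type
  | zero : Term
  | succ : Term → Term
  | cons : Term → Term → Term
  | nil  : Term
  | sym  : ℕ → Term
deriving DecidableEq

/-- The numeral `sⁱ(0)` representing a natural number. -/
def num : ℕ → Term
  | 0 => Term.zero
  | n + 1 => Term.succ (num n)

/-- `NthMember k e t` : `e` is the `k`-th member (k ≥ 1) of the term `t`,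
i.e. `t = [e₁,…,e_{k-1}, e | t']`. -/
def NthMember : ℕ → Term → Term → Prop
  | 0, _, _ => False
  | 1, e, t => ∃ r, t = Term.cons e r
  | k + 2, e, t => ∃ h r, t = Term.cons h r ∧ NthMember (k + 1) e r

/-- `e` is a member of the term `t`. -/
def IsMember (e t : Term) : Prop := ∃ k, NthMember k e t

/-- `t` is a (proper, nil-terminated) list. -/
inductive IsList : Term → Prop
  | nil : IsList Term.nil
  | cons (h t : Term) : IsList t → IsList (Term.cons h t)

/-- The members of `cs` are pairwise distinct (no member occurs at two positions). -/
def DistinctMembers (cs : Term) : Prop :=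
  ∀ k1 k2 e, NthMember k1 e cs → NthMember k2 e cs → k1 = k2

/-- `(cs,us,ds)` represents a correct placement of queens `1,…,m`
in the context of row `i` (Definition 3 of the paper):
`cs` is a list of distinct members containing `1,…,m`; the up diagonal
numbers `k+j-i` and down diagonal numbers `k+i-j` of the queens `1,…,m`
(queen `j` being the `k`-th member of `cs`) are pairwise distinct; and every
positive such diagonal number `l` of queen `j` is reflected by `j` being the
`l`-th member of `us` (resp. `ds`). -/
def CorrectUpTo (m i : ℕ) (cs us ds : Term) : Prop :=
  m ≤ i ∧
  IsList cs ∧ DistinctMembers cs ∧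
  (∀ j, 1 ≤ j → j ≤ m → IsMember (num j) cs) ∧
  (∀ j1 j2 k1 k2, 1 ≤ j1 → j1 ≤ m → 1 ≤ j2 → j2 ≤ m →
     NthMember k1 (num j1) cs → NthMember k2 (num j2) cs →
     (k1 + j1 : ℤ) - i = (k2 + j2 : ℤ) - i → j1 = j2) ∧
  (∀ j1 j2 k1 k2, 1 ≤ j1 → j1 ≤ m → 1 ≤ j2 → j2 ≤ m →
     NthMember k1 (num j1) cs → NthMember k2 (num j2) cs →
     (k1 + i : ℤ) - j1 = (k2 + i : ℤ) - j2 → j1 = j2) ∧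
  (∀ j k (l : ℤ), 1 ≤ j → j ≤ m → NthMember k (num j) cs →
     (k + j : ℤ) - i = l → 0 < l → NthMember l.toNat (num j) us) ∧
  (∀ j k (l : ℤ), 1 ≤ j → j ≤ m → NthMember k (num j) cs →
     (k + i : ℤ) - j = l → 0 < l → NthMember l.toNat (num j) ds)

/-- Ground atoms of the n-queens program. -/
inductive Atom : Type
  | pq  (i cs us ds : Term)
  | pqs (i cs us ds : Term)
deriving DecidableEq

/-- A ground clause: a head together with the list of body atoms. -/
abbrev Clause := Atom × List Atom

/-- A (ground instantiation of a) definite program. -/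
abbrev Program := Set Clause

/-- `S` is an Herbrand model of `P`. -/
def IsModel (S : Set Atom) (P : Program) : Prop :=
  ∀ c ∈ P, (∀ b ∈ c.2, b ∈ S) → c.1 ∈ S

/-- The least Herbrand model of `P`. -/
def LHM (P : Program) : Set Atom := ⋂₀ {S | IsModel S P}

/-- A ground atom `A` is covered by program `P` w.r.t. specification `S`. -/
def Covered (P : Program) (S : Set Atom) (A : Atom) : Prop :=
  ∃ c ∈ P, c.1 = A ∧ ∀ b ∈ c.2, b ∈ S

/-- The set of ground instances of the two pq clauses:
`pq(I,[I|_],[I|_],[I|_])` and `pq(I,[_|Cs],[_|Us],[_|Ds]) ← pq(I,Cs,Us,Ds)`. -/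
def PQprog : Program :=
  {c | (∃ i x y z, c = (Atom.pq i (Term.cons i x) (Term.cons i y) (Term.cons i z), [])) ∨
       (∃ i c' cs u us d ds,
          c = (Atom.pq i (Term.cons c' cs) (Term.cons u us) (Term.cons d ds),
               [Atom.pq i cs us ds]))}

/-- The set of ground instances of the four clauses of NQUEENS. -/
def NQprog : Program :=
  {c | (∃ x y z, c = (Atom.pqs Term.zero x y z, [])) ∨
       (∃ i cs us u d ds,
          c = (Atom.pqs (Term.succ i) cs us (Term.cons d ds),
               [Atom.pqs i cs (Term.cons u us) ds, Atom.pq (Term.succ i) cs us ds])) ∨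
       (∃ i x y z, c = (Atom.pq i (Term.cons i x) (Term.cons i y) (Term.cons i z), [])) ∨
       (∃ i c' cs u us d ds,
          c = (Atom.pq i (Term.cons c' cs) (Term.cons u us) (Term.cons d ds),
               [Atom.pq i cs us ds]))}

/-- The specification `S_pq`. -/
def Spq : Set Atom :=
  {a | ∃ i cs us ds k, a = Atom.pq i cs us ds ∧ 0 < k ∧
       NthMember k i cs ∧ NthMember k i us ∧ NthMember k i ds}

/-- The correctness specification `S_pqs`. -/
def Spqs : Set Atom :=
  {a | (∃ cs us ds, a = Atom.pqs Term.zero cs us ds) ∨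
       (∃ i cs us t ds, 0 < i ∧ a = Atom.pqs (num i) cs us (Term.cons t ds) ∧
          (∀ j, 1 ≤ j → j ≤ i → IsMember (num j) cs) ∧
          (IsList cs → DistinctMembers cs → CorrectUpTo i i cs us ds))}

/-- The completeness specification `S⁰_pqs`. -/
def S0pqs : Set Atom :=
  {a | ∃ i cs us t ds, 0 < i ∧ a = Atom.pqs (num i) cs us (Term.cons t ds) ∧
        CorrectUpTo i i cs us ds}

/-- All atoms `pqs(0,cs,us,ds)`. -/
def SpqsZero : Set Atom :=
  {a | ∃ cs us ds, a = Atom.pqs Term.zero cs us ds}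

/-- The level mapping on ground terms: `|[h|t]| = 1+|t|`, `|s(t)| = 1+|t|`,
`|f(…)| = 0` otherwise. -/
def tlvl : Term → ℕ
  | Term.cons _ t => 1 + tlvl t
  | Term.succ t => 1 + tlvl t
  | _ => 0

/-- The level mapping on ground atoms. -/
def alvl : Atom → ℕ
  | Atom.pqs i cs _ _ => tlvl i + tlvl cs
  | Atom.pq _ cs _ _ => tlvl cs

/-- `t` is a list of length `n`. -/
inductive IsListLen : Term → ℕ → Prop
  | nil : IsListLen Term.nil 0
  | cons (h t : Term) (n : ℕ) : IsListLen t n → IsListLen (Term.cons h t) (n + 1)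

lemma nthMember_pos {k : ℕ} {e t : Term} (h : NthMember k e t) : 0 < k := by
  cases k with
  | zero => exact (h : False).elim
  | succ n => omega

lemma nthMember_fun : ∀ (k : ℕ) (e e' t : Term), NthMember k e t → NthMember k e' t → e = e'
  | 0, _, _, _, h, _ => (h : False).elim
  | 1, e, e', t, ⟨r, hr⟩, ⟨r', hr'⟩ => by
      subst hr; injection hr'
  | (k+2), e, e', t, ⟨h, r, hr, hm⟩, ⟨h', r', hr', hm'⟩ => by
      subst hr; injection hr' with h1 h2; subst h2
      exact nthMember_fun (k+1) e e' r hm hm'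

lemma num_inj {a b : ℕ} (h : num a = num b) : a = b := by
  induction a generalizing b with
  | zero => cases b with
    | zero => rfl
    | succ b => simp [num] at h
  | succ a ih => cases b with
    | zero => simp [num] at h
    | succ b =>
        simp only [num, Term.succ.injEq] at h
        exact congrArg Nat.succ (ih h)

lemma nthMember_cons {k : ℕ} {e t : Term} (x : Term) (hm : NthMember k e t) :
    NthMember (k+1) e (Term.cons x t) := by
  have hk := nthMember_pos hm
  obtain ⟨n, rfl⟩ : ∃ n, k = n + 1 := ⟨k - 1, by omega⟩
  exact ⟨x, t, rfl, hm⟩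

lemma nthMember_tail {n : ℕ} {e x t : Term} (hn : 0 < n)
    (hm : NthMember (n+1) e (Term.cons x t)) : NthMember n e t := by
  obtain ⟨n', rfl⟩ : ∃ n', n = n' + 1 := ⟨n - 1, by omega⟩
  obtain ⟨h', r', heq, hm'⟩ := hm
  injection heq with h1 h2
  subst h2
  exact hm'

lemma correct_one (cs us ds : Term) (k₀ : ℕ)
    (hL : IsList cs) (hD : DistinctMembers cs)
    (hc : NthMember k₀ (num 1) cs) (hu : NthMember k₀ (num 1) us)
    (hd : NthMember k₀ (num 1) ds) :
    CorrectUpTo 1 1 cs us ds := by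
  refine ⟨le_refl 1, hL, hD, ?_, ?_, ?_, ?_, ?_⟩
  · intro j h1 h2
    have : j = 1 := by omega
    subst this; exact ⟨k₀, hc⟩
  · intro j1 j2 k1 k2 h1 h2 h3 h4 _ _ _; omega
  · intro j1 j2 k1 k2 h1 h2 h3 h4 _ _ _; omega
  · intro j k l h1 h2 hk hl hpos
    have hj : j = 1 := by omega
    subst hj
    have hkk : k = k₀ := hD k k₀ _ hk hc
    subst hkk
    have hcast : l.toNat = k := by omega
    rwa [hcast]
  · intro j k l h1 h2 hk hl hpos
    have hj : j = 1 := by omega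
    subst hj
    have hkk : k = k₀ := hD k k₀ _ hk hc
    subst hkk
    have hcast : l.toNat = k := by omega
    rwa [hcast]

lemma correct_step (m : ℕ) (cs u us t ds : Term) (k₀ : ℕ)
    (hc : NthMember k₀ (num (m+1)) cs)
    (hu : NthMember k₀ (num (m+1)) us)
    (hd : NthMember k₀ (num (m+1)) (Term.cons t ds))
    (hold : CorrectUpTo m m cs (Term.cons u us) ds) :
    CorrectUpTo (m+1) (m+1) cs us (Term.cons t ds) := by
  obtain ⟨-, hL, hD, hmem, hup, hdn, hru, hrd⟩ := hold
  have hk₀ : 0 < k₀ := nthMember_pos hc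
  refine ⟨le_refl _, hL, hD, ?_, ?_, ?_, ?_, ?_⟩
  · intro j h1 h2
    by_cases hj : j ≤ m
    · exact hmem j h1 hj
    · have : j = m+1 := by omega
      subst this; exact ⟨k₀, hc⟩
  · -- up distinctness
    intro j1 j2 k1 k2 h11 h12 h21 h22 hm1 hm2 heq
    by_cases hj1 : j1 ≤ m
    · by_cases hj2 : j2 ≤ m
      · exact hup j1 j2 k1 k2 h11 hj1 h21 hj2 hm1 hm2 (by omega)
      · have hj2' : j2 = m+1 := by omega
        subst hj2'
        have hk2 : k2 = k₀ := hD k2 k₀ _ hm2 hc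
        have h1pos := nthMember_pos hm1
        have hr := hru j1 k1 ((k₀:ℤ)+1) h11 hj1 hm1 (by omega) (by omega)
        have hcast : ((k₀:ℤ)+1).toNat = k₀ + 1 := by omega
        rw [hcast] at hr
        have h3 : NthMember (k₀+1) (num (m+1)) (Term.cons u us) := nthMember_cons u hu
        have := num_inj (nthMember_fun _ _ _ _ hr h3)
        omega
    · by_cases hj2 : j2 ≤ m
      · have hj1' : j1 = m+1 := by omega
        subst hj1'
        have hk1 : k1 = k₀ := hD k1 k₀ _ hm1 hc
        have h2pos := nthMember_pos hm2
        have hr := hru j2 k2 ((k₀:ℤ)+1) h21 hj2 hm2 (by omega) (by omega)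
        have hcast : ((k₀:ℤ)+1).toNat = k₀ + 1 := by omega
        rw [hcast] at hr
        have h3 : NthMember (k₀+1) (num (m+1)) (Term.cons u us) := nthMember_cons u hu
        have := num_inj (nthMember_fun _ _ _ _ hr h3)
        omega
      · omega
  · -- down distinctness
    intro j1 j2 k1 k2 h11 h12 h21 h22 hm1 hm2 heq
    by_cases hj1 : j1 ≤ m
    · by_cases hj2 : j2 ≤ m
      · exact hdn j1 j2 k1 k2 h11 hj1 h21 hj2 hm1 hm2 (by omega)
      · have hj2' : j2 = m+1 := by omega
        subst hj2'
        have hk2 : k2 = k₀ := hD k2 k₀ _ hm2 hc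
        have h1pos := nthMember_pos hm1
        have hr := hrd j1 k1 ((k1:ℤ)+m-j1) h11 hj1 hm1 rfl (by omega)
        have h2' := nthMember_cons t hr
        have hcast : ((k1:ℤ)+m-j1).toNat + 1 = k₀ := by omega
        rw [hcast] at h2'
        have := num_inj (nthMember_fun _ _ _ _ h2' hd)
        omega
    · by_cases hj2 : j2 ≤ m
      · have hj1' : j1 = m+1 := by omega
        subst hj1'
        have hk1 : k1 = k₀ := hD k1 k₀ _ hm1 hc
        have h2pos := nthMember_pos hm2
        have hr := hrd j2 k2 ((k2:ℤ)+m-j2) h21 hj2 hm2 rfl (by omega)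
        have h2' := nthMember_cons t hr
        have hcast : ((k2:ℤ)+m-j2).toNat + 1 = k₀ := by omega
        rw [hcast] at h2'
        have := num_inj (nthMember_fun _ _ _ _ h2' hd)
        omega
      · omega
  · -- up reflection
    intro j k l h1 h2 hk hl hpos
    by_cases hj : j ≤ m
    · have hkpos := nthMember_pos hk
      have hr := hru j k (l+1) h1 hj hk (by omega) (by omega)
      have hcast : (l+1).toNat = l.toNat + 1 := by omega
      rw [hcast] at hr
      exact nthMember_tail (by omega) hr
    · have hj' : j = m+1 := by omega
      subst hj'
      have hkk : k = k₀ := hD k k₀ _ hk hc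
      have hcast : l.toNat = k₀ := by omega
      rwa [hcast]
  · -- down reflection
    intro j k l h1 h2 hk hl hpos
    by_cases hj : j ≤ m
    · have hkpos := nthMember_pos hk
      have hr := hrd j k (l-1) h1 hj hk (by omega) (by omega)
      have h2' := nthMember_cons t hr
      have hcast : (l-1).toNat + 1 = l.toNat := by omega
      rwa [hcast] at h2'
    · have hj' : j = m+1 := by omega
      subst hj'
      have hkk : k = k₀ := hD k k₀ _ hk hc
      have hcast : l.toNat = k₀ := by omega
      rwa [hcast]

lemma model_nq : IsModel (Spq ∪ Spqs) NQprog := by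
  intro c hc hbody
  rcases hc with ⟨x, y, z, rfl⟩ | ⟨i, cs, us, u, d, ds, rfl⟩ | ⟨i, x, y, z, rfl⟩ | ⟨i, c', cs, u, us, d, ds, rfl⟩
  · -- pqs zero
    exact Or.inr (Or.inl ⟨x, y, z, rfl⟩)
  · -- pqs succ
    have hb1 : Atom.pqs i cs (Term.cons u us) ds ∈ Spq ∪ Spqs := hbody _ (by simp)
    have hb2 : Atom.pq (Term.succ i) cs us ds ∈ Spq ∪ Spqs := hbody _ (by simp)
    have hb1' : Atom.pqs i cs (Term.cons u us) ds ∈ Spqs := by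
      rcases hb1 with h | h
      · obtain ⟨_, _, _, _, _, heq, _⟩ := h
        simp at heq
      · exact h
    have hb2' : Atom.pq (Term.succ i) cs us ds ∈ Spq := by
      rcases hb2 with h | h
      · exact h
      · rcases h with ⟨_, _, _, heq⟩ | ⟨_, _, _, _, _, _, heq, _⟩ <;> simp at heq
    obtain ⟨i', cs', us', ds', k₀, heq2, hk₀, hcc, huu, hdd⟩ := hb2'
    simp only [Atom.pq.injEq] at heq2
    obtain ⟨hi', hcs', hus', hds'⟩ := heq2
    subst hi'; subst hcs'; subst hus'; subst hds'
    rcases hb1' with ⟨cs', us', ds', heq⟩ | ⟨m, cs', us', t', ds'', hm, heq, hmem', hcorr'⟩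
    · -- i = zero : base case
      simp only [Atom.pqs.injEq] at heq
      obtain ⟨hi, -, -, -⟩ := heq
      subst hi
      refine Or.inr (Or.inr ⟨1, cs, us, d, ds, one_pos, rfl, ?_, ?_⟩)
      · intro j h1 h2
        have : j = 1 := by omega
        subst this
        exact ⟨k₀, hcc⟩
      · intro hL hD
        exact correct_one cs us ds k₀ hL hD hcc huu hdd
    · -- i = num m : inductive case
      simp only [Atom.pqs.injEq] at heq
      obtain ⟨hi, hcs, hus, hds⟩ := heq
      subst hi
      subst hds
      rcases hcs with rfl
      rcases hus with rfl
      have hcc' : NthMember k₀ (num (m+1)) cs := hcc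
      have huu' : NthMember k₀ (num (m+1)) us := huu
      have hdd' : NthMember k₀ (num (m+1)) (Term.cons t' ds'') := hdd
      refine Or.inr (Or.inr ⟨m+1, cs, us, d, Term.cons t' ds'', by omega, rfl, ?_, ?_⟩)
      · intro j h1 h2
        by_cases hj : j ≤ m
        · exact hmem' j h1 hj
        · have : j = m+1 := by omega
          subst this
          exact ⟨k₀, hcc'⟩
      · intro hL hD
        exact correct_step m cs u us t' ds'' k₀ hcc' huu' hdd' (hcorr' hL hD)
  · -- pq base clause
    exact Or.inl ⟨i, Term.cons i x, Term.cons i y, Term.cons i z, 1, rfl, one_pos,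
      ⟨x, rfl⟩, ⟨y, rfl⟩, ⟨z, rfl⟩⟩
  · -- pq step clause
    have hb : Atom.pq i cs us ds ∈ Spq ∪ Spqs := hbody _ (by simp)
    have hb' : Atom.pq i cs us ds ∈ Spq := by
      rcases hb with h | h
      · exact h
      · rcases h with ⟨_, _, _, heq⟩ | ⟨_, _, _, _, _, _, heq, _⟩ <;> simp at heq
    obtain ⟨i', cs', us', ds', k, heq, hk, hcc, huu, hdd⟩ := hb'
    simp only [Atom.pq.injEq] at heq
    obtain ⟨rfl, rfl, rfl, rfl⟩ := heq
    exact Or.inl ⟨i, Term.cons c' cs, Term.cons u us, Term.cons d ds, k+1, rfl, by omega,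
      nthMember_cons c' hcc, nthMember_cons u huu, nthMember_cons d hdd⟩

/-- Correctness of NQUEENS: its least Herbrand model is contained in the
specification `S = S_pq ∪ S_pqs`. -/
theorem nqueens_correct : LHM NQprog ⊆ Spq ∪ Spqs := by
  intro a ha
  exact ha (Spq ∪ Spqs) model_nq
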